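/- If the min-cost circulation problem on a plane graph G has a finite optimum, then the optimal value of the face-potential LP on the geometric dual equals the optimal value of the min-cost transshipment problem on the network G^ built from the capacitated dual darts (with balances given by the face costs c(h) and arc costs given by the dart capacities), and hence equals the optimal value of the original min-cost circulation problem. -/

import Mathlib

open Finset

/-- A plane directed graph: arcs with endpoints, and for each arc the faces on
its left-hand side and right-hand side in the embedding. -/
structure PlaneGraph (V E H : Type) where
  src : E → V
  dst : E → V
  left : E → H
  right : E → H

variable {V E H : Type}

/-- Net outflow of `f` at a vertex. -/
def netAt [Fintype E] [DecidableEq V] (G : PlaneGraph V E H) (f : E → ℝ) (v : V) : ℝ :=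
  (∑ e, if G.src e = v then f e else 0) - (∑ e, if G.dst e = v then f e else 0)

/-- The clockwise unit flow around face `h`: `+1` on arcs with `h` on the right,
`-1` on arcs with `h` on the left. -/
def faceFlow [DecidableEq H] (G : PlaneGraph V E H) (h : H) (e : E) : ℝ :=
  (if G.right e = h then 1 else 0) - (if G.left e = h then 1 else 0)

/-- The underlying undirected graph of `G` is connected. -/
def PrimalConnected (G : PlaneGraph V E H) : Prop :=
  ∀ a b : V, Relation.ReflTransGen
    (fun x y => ∃ e, (G.src e = x ∧ G.dst e = y) ∨ (G.src e = y ∧ G.dst e = x)) a b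

/-- The geometric dual graph of `G` is connected. -/
def DualConnected (G : PlaneGraph V E H) : Prop :=
  ∀ a b : H, Relation.ReflTransGen
    (fun x y => ∃ e, (G.left e = x ∧ G.right e = y) ∨ (G.left e = y ∧ G.right e = x)) a b

/-- The boundary of every face is a circulation (a property of plane embeddings). -/
def FaceCond [Fintype E] [DecidableEq V] [DecidableEq H] (G : PlaneGraph V E H) : Prop :=
  ∀ (h : H) (v : V), netAt G (faceFlow G h) v = 0

/-- Euler's formula `|V| - |E| + |H| = 2` for the embedding on the sphere. -/
def EulerFormula (V E H : Type) [Fintype V] [Fintype E] [Fintype H] : Prop :=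
  (Fintype.card V : ℤ) - Fintype.card E + Fintype.card H = 2

/-- The cost of sending one unit of flow clockwise around face `h`. -/
def faceCost [Fintype E] [DecidableEq H] (G : PlaneGraph V E H) (c : E → ℝ) (h : H) : ℝ :=
  (∑ e, if G.right e = h then c e else 0) - (∑ e, if G.left e = h then c e else 0)


set_option linter.unusedSectionVars false

section FarkasAux

variable {ι : Type*} [Fintype ι] [DecidableEq ι]
variable {F : Type*} [NormedAddCommGroup F] [InnerProductSpace ℝ F] [FiniteDimensional ℝ F]

lemma reduce_step (v : ι → F) (s : Finset ι) (φ : ι → ℝ) (hφ : ∀ i, 0 ≤ φ i)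
    (d : ι → ℝ) (hd : ∑ i ∈ s, d i • v i = 0) (i₁ : ι) (hi₁ : i₁ ∈ s) (hd₁ : 0 < d i₁) :
    ∃ i₀ ∈ s, ∃ ψ : ι → ℝ, (∀ i, 0 ≤ ψ i) ∧
      ∑ i ∈ s.erase i₀, ψ i • v i = ∑ i ∈ s, φ i • v i := by
  classical
  set P : Finset ι := s.filter (fun i => 0 < d i) with hP
  have hPne : P.Nonempty := ⟨i₁, by simp [hP, hi₁, hd₁]⟩
  obtain ⟨i₀, hi₀P, hmin⟩ := P.exists_min_image (fun i => φ i / d i) hPne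
  have hi₀s : i₀ ∈ s := (Finset.mem_filter.mp hi₀P).1
  have hdi₀ : 0 < d i₀ := (Finset.mem_filter.mp hi₀P).2
  set t₀ : ℝ := φ i₀ / d i₀ with ht₀
  have ht₀nn : 0 ≤ t₀ := div_nonneg (hφ i₀) hdi₀.le
  set ψ : ι → ℝ := fun i => if i ∈ s then φ i - t₀ * d i else 0 with hψ
  have hψnn : ∀ i, 0 ≤ ψ i := by
    intro i
    by_cases his : i ∈ s
    · simp only [hψ, his, if_true, sub_nonneg]
      by_cases hdi : 0 < d i
      · have := hmin i (Finset.mem_filter.mpr ⟨his, hdi⟩)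
        calc t₀ * d i ≤ (φ i / d i) * d i := by nlinarith
          _ = φ i := div_mul_cancel₀ _ hdi.ne'
      · have : t₀ * d i ≤ 0 := mul_nonpos_of_nonneg_of_nonpos ht₀nn (not_lt.mp hdi)
        linarith [hφ i]
    · simp [hψ, his]
  have hψi₀ : ψ i₀ = 0 := by
    simp [hψ, hi₀s, ht₀, div_mul_cancel₀ _ hdi₀.ne']
  refine ⟨i₀, hi₀s, ψ, hψnn, ?_⟩
  have h1 : ∑ i ∈ s.erase i₀, ψ i • v i = ∑ i ∈ s, ψ i • v i := by
    rw [← Finset.add_sum_erase s _ hi₀s, hψi₀, zero_smul, zero_add]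
  rw [h1]
  have h2 : ∀ i ∈ s, ψ i • v i = φ i • v i - t₀ • (d i • v i) := by
    intro i his
    simp only [hψ, his, if_true, sub_smul, smul_smul]
  rw [Finset.sum_congr rfl h2, Finset.sum_sub_distrib, ← Finset.smul_sum, hd, smul_zero, sub_zero]

lemma cone_cara (v : ι → F) : ∀ (n : ℕ) (s : Finset ι), s.card ≤ n → ∀ (φ : ι → ℝ), (∀ i, 0 ≤ φ i) →
    ∃ t : Finset ι, t ⊆ s ∧ LinearIndependent ℝ (fun i : t => v i) ∧
      ∃ ψ : ι → ℝ, (∀ i, 0 ≤ ψ i) ∧ ∑ i ∈ t, ψ i • v i = ∑ i ∈ s, φ i • v i := by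
  intro n
  induction n with
  | zero =>
    intro s hs φ hφ
    have : s = ∅ := Finset.card_eq_zero.mp (Nat.le_zero.mp hs)
    subst this
    exact ⟨∅, subset_rfl, linearIndependent_empty_type, φ, hφ, rfl⟩
  | succ n ih =>
    intro s hs φ hφ
    by_cases hli : LinearIndependent ℝ (fun i : s => v i)
    · exact ⟨s, subset_rfl, hli, φ, hφ, rfl⟩
    · obtain ⟨g, hg0, i₁, hgi⟩ := Fintype.not_linearIndependent_iff.mp hli
      set d : ι → ℝ := fun i => if h : i ∈ s then g ⟨i, h⟩ else 0 with hdd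
      have hd0 : ∑ i ∈ s, d i • v i = 0 := by
        rw [← Finset.sum_attach s (fun i => d i • v i)]
        simpa [hdd] using hg0
      have hd1 : d i₁ ≠ 0 := by simp [hdd, i₁.2, hgi]
      have key : ∀ (d' : ι → ℝ), (∑ i ∈ s, d' i • v i = 0) → ∀ j ∈ s, 0 < d' j →
          ∃ t : Finset ι, t ⊆ s ∧ LinearIndependent ℝ (fun i : t => v i) ∧
            ∃ ψ : ι → ℝ, (∀ i, 0 ≤ ψ i) ∧ ∑ i ∈ t, ψ i • v i = ∑ i ∈ s, φ i • v i := by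
        intro d' hd' j hjs hdj
        obtain ⟨i₀, hi₀s, ψ, hψnn, hψsum⟩ := reduce_step v s φ hφ d' hd' j hjs hdj
        have hcard : (s.erase i₀).card ≤ n := by
          have := Finset.card_erase_of_mem hi₀s
          omega
        obtain ⟨t, hts, hli', ψ', hψ'nn, hψ'sum⟩ := ih (s.erase i₀) hcard ψ hψnn
        exact ⟨t, hts.trans (Finset.erase_subset _ _), hli', ψ', hψ'nn, by rw [hψ'sum, hψsum]⟩
      rcases lt_or_gt_of_ne hd1 with hneg | hpos
      · refine key (fun i => -d i) ?_ i₁ i₁.2 (by simpa using hneg)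
        simp only [neg_smul]
        rw [Finset.sum_neg_distrib, hd0, neg_zero]
      · exact key d hd0 i₁ i₁.2 hpos

lemma cone_closed (v : ι → F) :
    IsClosed {x : F | ∃ φ : ι → ℝ, (∀ i, 0 ≤ φ i) ∧ x = ∑ i, φ i • v i} := by
  classical
  have heq : {x : F | ∃ φ : ι → ℝ, (∀ i, 0 ≤ φ i) ∧ x = ∑ i, φ i • v i} =
      ⋃ (t : {t : Finset ι // LinearIndependent ℝ (fun i : t => v i)}),
        (fun ψ : ((t : Finset ι) : Type _) → ℝ => ∑ i, ψ i • v i) ''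
          {ψ | ∀ i, 0 ≤ ψ i} := by
    ext x
    simp only [Set.mem_setOf_eq, Set.mem_iUnion, Set.mem_image]
    constructor
    · rintro ⟨φ, hφ, rfl⟩
      obtain ⟨t, -, hli, ψ, hψnn, hsum⟩ :=
        cone_cara v (Finset.univ.card) Finset.univ (le_refl _) φ hφ
      refine ⟨⟨t, hli⟩, fun i => ψ i, fun i => hψnn i, ?_⟩
      rw [← hsum]
      exact Finset.sum_coe_sort t (fun i => ψ i • v i)
    · rintro ⟨⟨t, hli⟩, ψ, hψ, rfl⟩
      refine ⟨fun i => if h : i ∈ t then ψ ⟨i, h⟩ else 0, ?_, ?_⟩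
      · intro i
        by_cases h : i ∈ t
        · simpa [h] using hψ ⟨i, h⟩
        · simp [h]
      · rw [← Finset.sum_subset (Finset.subset_univ t) (by intro i _ hit; simp [hit])]
        rw [← Finset.sum_coe_sort t
          (fun i => (if h : i ∈ t then ψ ⟨i, h⟩ else 0) • v i)]
        apply Finset.sum_congr rfl
        intro i _
        simp [i.2]
  rw [heq]
  apply isClosed_iUnion_of_finite
  rintro ⟨t, hli⟩
  show IsClosed ((fun ψ : {x // x ∈ t} → ℝ => ∑ i, ψ i • v i.1) '' {ψ | ∀ i, 0 ≤ ψ i})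
  set L : ({x // x ∈ t} → ℝ) →ₗ[ℝ] F :=
    Fintype.linearCombination ℝ (fun i : {x // x ∈ t} => v i.1) with hL
  have hLapp : ∀ ψ : {x // x ∈ t} → ℝ, L ψ = ∑ i, ψ i • v i.1 := by
    intro ψ; simp [hL, Fintype.linearCombination_apply]
  have hker : LinearMap.ker L = ⊥ := by
    rw [LinearMap.ker_eq_bot']
    intro ψ hψ
    have := Fintype.linearIndependent_iff.mp hli ψ (by rw [← hLapp]; exact hψ)
    exact funext this
  have hclosed : IsClosed {ψ : {x // x ∈ t} → ℝ | ∀ i, 0 ≤ ψ i} := by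
    have : {ψ : {x // x ∈ t} → ℝ | ∀ i, 0 ≤ ψ i} =
        ⋂ i, {ψ | 0 ≤ ψ i} := by ext; simp [Set.mem_iInter]
    rw [this]
    exact isClosed_iInter fun i => isClosed_le continuous_const (continuous_apply i)
  have hce := LinearMap.isClosedEmbedding_of_injective hker
  have himg : (fun ψ : {x // x ∈ t} → ℝ => ∑ i, ψ i • v i.1) '' {ψ | ∀ i, 0 ≤ ψ i}
      = L '' {ψ | ∀ i, 0 ≤ ψ i} := Set.image_congr (fun ψ _ => (hLapp ψ).symm)
  rw [himg]
  exact hce.isClosedMap _ hclosed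

lemma farkas_coord {ι κ : Type*} [Fintype ι] [DecidableEq ι] [Fintype κ]
    (v : ι → κ → ℝ) (b : κ → ℝ)
    (hyp : ∀ y : κ → ℝ, (∀ i, 0 ≤ ∑ k, v i k * y k) → 0 ≤ ∑ k, b k * y k) :
    ∃ φ : ι → ℝ, (∀ i, 0 ≤ φ i) ∧ ∀ k, b k = ∑ i, φ i * v i k := by
  classical
  set F : Type _ := EuclideanSpace ℝ κ with hF
  set L : F ≃ₗ[ℝ] (κ → ℝ) := WithLp.linearEquiv 2 ℝ (κ → ℝ) with hLdef
  set v' : ι → F := fun i => L.symm (v i) with hv'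
  set b' : F := L.symm b with hb'
  have hLv : ∀ i, L (v' i) = v i := fun i => L.apply_symm_apply (v i)
  have hLcoord : ∀ (x : F) (k : κ), x k = L x k := fun x k => rfl
  set C : Set F := {x : F | ∃ φ : ι → ℝ, (∀ i, 0 ≤ φ i) ∧ x = ∑ i, φ i • v' i} with hC
  -- it suffices to show b' ∈ C
  suffices hbC : b' ∈ C by
    obtain ⟨φ, hφ, hsum⟩ := hbC
    refine ⟨φ, hφ, fun k => ?_⟩
    have h1 : L b' = ∑ i, φ i • L (v' i) := by rw [hsum, map_sum]; simp
    rw [L.apply_symm_apply] at h1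
    have h2 := congrFun h1 k
    rw [h2, Finset.sum_apply]
    apply Finset.sum_congr rfl
    intro i _
    rw [hLv, Pi.smul_apply, smul_eq_mul]
  by_contra hbC
  -- C is a closed convex cone
  have hCcone : ∃ K : ConvexCone ℝ F, (K : Set F) = C := by
    refine ⟨⟨C, ?_, ?_⟩, rfl⟩
    · rintro a ha x ⟨φ, hφ, rfl⟩
      refine ⟨fun i => a * φ i, fun i => mul_nonneg ha.le (hφ i), ?_⟩
      rw [Finset.smul_sum]
      apply Finset.sum_congr rfl
      intro i _
      rw [smul_smul]
    · rintro x ⟨φ, hφ, rfl⟩ y ⟨ψ, hψ, rfl⟩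
      refine ⟨fun i => φ i + ψ i, fun i => add_nonneg (hφ i) (hψ i), ?_⟩
      rw [← Finset.sum_add_distrib]
      apply Finset.sum_congr rfl
      intro i _
      rw [add_smul]
  obtain ⟨K, hK⟩ := hCcone
  have hKne : (K : Set F).Nonempty := ⟨0, by rw [hK]; exact ⟨0, fun i => le_refl 0, by simp⟩⟩
  have hKcl : IsClosed (K : Set F) := by rw [hK]; exact cone_closed v'
  have hbK : b' ∉ K := fun h => hbC (hK ▸ h)
  obtain ⟨y, hy1, hy2⟩ : ∃ y : F, (∀ x ∈ (K : Set F), 0 ≤ inner ℝ x y) ∧ inner ℝ y b' < 0 := by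
    let PC : ProperCone ℝ F :=
      { carrier := C
        add_mem' := by
          rintro _ _ ⟨φ, hφ, rfl⟩ ⟨ψ, hψ, rfl⟩
          exact ⟨fun i => φ i + ψ i, fun i => add_nonneg (hφ i) (hψ i),
            by simp [add_smul, Finset.sum_add_distrib]⟩
        zero_mem' := ⟨0, fun i => le_refl 0, by simp⟩
        smul_mem' := by
          rintro c _ ⟨φ, hφ, rfl⟩
          exact ⟨fun i => (c : ℝ) * φ i, fun i => mul_nonneg c.2 (hφ i),
            by rw [Finset.smul_sum]; exact Finset.sum_congr rfl fun i _ => by rw [mul_smul]; rfl⟩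
        isClosed' := cone_closed v' }
    obtain ⟨y, h1, h2⟩ := ProperCone.hyperplane_separation' PC (x₀ := b') hbC
    exact ⟨y, fun x hx => h1 x (by rw [hK] at hx; exact hx), by rwa [real_inner_comm]⟩
  -- translate
  have hvy : ∀ i, 0 ≤ ∑ k, v i k * y k := by
    intro i
    have hvC : v' i ∈ (K : Set F) := by
      rw [hK]
      refine ⟨fun j => if j = i then 1 else 0, fun j => by positivity, ?_⟩
      simp [Finset.sum_ite_eq]
    have := hy1 _ hvC
    rwa [show inner ℝ (v' i) y = ∑ k, v i k * y k from by
      rw [PiLp.inner_apply]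
      apply Finset.sum_congr rfl
      intro k _
      rw [RCLike.inner_apply, conj_trivial]
      exact mul_comm _ _] at this
  have hby := hyp (fun k => y k) hvy
  rw [show ∑ k, b k * y k = inner ℝ y b' from by
    rw [PiLp.inner_apply]
    apply Finset.sum_congr rfl
    intro k _
    rw [RCLike.inner_apply, conj_trivial]
    rfl] at hby
  linarith

end FarkasAux

lemma sum_mul_ite_aux {α β : Type} [Fintype α] [Fintype β] [DecidableEq β]
    (q : α → β) (cc : α → ℝ) (π : β → ℝ) :
    ∑ h, (∑ e, if q e = h then cc e else 0) * π h = ∑ e, cc e * π (q e) := by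
  simp only [Finset.sum_mul, ite_mul, zero_mul]
  rw [Finset.sum_comm]
  apply Finset.sum_congr rfl
  intro e _
  simp [Finset.sum_ite_eq]

lemma sum_swap_aux {α β : Type} [Fintype α] [Fintype β] (P : α → Prop) [DecidablePred P]
    (g : β → α → ℝ) (π : β → ℝ) :
    ∑ e, (if P e then ∑ h, π h * g h e else 0) = ∑ h, π h * ∑ e, (if P e then g h e else 0) := by
  calc ∑ e, (if P e then ∑ h, π h * g h e else 0)
      = ∑ e, ∑ h, (if P e then π h * g h e else 0) := by
        apply Finset.sum_congr rfl; intro e _; by_cases hPe : P e <;> simp [hPe]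
    _ = ∑ h, ∑ e, (if P e then π h * g h e else 0) := Finset.sum_comm
    _ = ∑ h, π h * ∑ e, (if P e then g h e else 0) := by
        apply Finset.sum_congr rfl; intro h _
        rw [Finset.mul_sum]
        apply Finset.sum_congr rfl; intro e _
        by_cases hPe : P e <;> simp [hPe]

lemma circ_repr [Fintype V] [Fintype E] [Fintype H] [DecidableEq V] [DecidableEq H]
    (G : PlaneGraph V E H) (hconn : PrimalConnected G) (hdual : DualConnected G)
    (heuler : EulerFormula V E H) (hface : FaceCond G) [Nonempty E]
    (f : E → ℝ) (hf : ∀ v, netAt G f v = 0) :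
    ∃ π : H → ℝ, ∀ e, f e = π (G.right e) - π (G.left e) := by
  classical
  have hVne : Nonempty V := ⟨G.src (Classical.arbitrary E)⟩
  have hHne : Nonempty H := ⟨G.left (Classical.arbitrary E)⟩
  set M : Matrix V E ℝ :=
    fun v e => (if G.src e = v then 1 else 0) - (if G.dst e = v then 1 else 0) with hM
  set N : Matrix E H ℝ :=
    fun e h => (if G.right e = h then 1 else 0) - (if G.left e = h then 1 else 0) with hN
  -- A and B
  have hAnet : ∀ (g : E → ℝ) (v : V), M.mulVecLin g v = netAt G g v := by
    intro g v
    simp only [Matrix.mulVecLin_apply, Matrix.mulVec, dotProduct]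
    simp [Matrix.mulVecLin_apply, Matrix.mulVec, dotProduct, hM, sub_mul, ite_mul,
      one_mul, zero_mul, Finset.sum_sub_distrib, netAt]
  have hBapp : ∀ (π : H → ℝ) (e : E), N.mulVecLin π e = π (G.right e) - π (G.left e) := by
    intro π e
    simp only [Matrix.mulVecLin_apply, Matrix.mulVec, dotProduct]
    simp [Matrix.mulVecLin_apply, Matrix.mulVec, dotProduct, hN, sub_mul, ite_mul,
      one_mul, zero_mul, Finset.sum_sub_distrib, Finset.sum_ite_eq]
  have hMN : M * N = 0 := by
    ext v h
    have h1 : (M * N) v h = netAt G (faceFlow G h) v := by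
      rw [Matrix.mul_apply]
      simp [Matrix.mul_apply, netAt, faceFlow, hM, hN, sub_mul, ite_mul, one_mul, zero_mul,
        Finset.sum_sub_distrib]
    rw [Matrix.zero_apply, h1, hface]
  -- range B ≤ ker A
  have hrangeker : LinearMap.range N.mulVecLin ≤ LinearMap.ker M.mulVecLin := by
    rw [LinearMap.range_le_ker_iff, ← Matrix.mulVecLin_mul, hMN]
    exact Matrix.mulVecLin_zero
  -- kernel of M.transpose is the constants
  have hMt : ∀ (p : V → ℝ) (e : E), M.transpose.mulVecLin p e = p (G.src e) - p (G.dst e) := by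
    intro p e
    simp only [Matrix.mulVecLin_apply, Matrix.mulVec, dotProduct, Matrix.transpose_apply]
    simp [Matrix.mulVecLin_apply, Matrix.mulVec, Matrix.vecMul, dotProduct, hM,
      Matrix.transpose_apply, sub_mul, ite_mul, mul_sub, mul_ite, mul_one, mul_zero,
      one_mul, zero_mul, Finset.sum_sub_distrib, Finset.sum_ite_eq]
  have hkerMt : LinearMap.ker M.transpose.mulVecLin = Submodule.span ℝ {(fun _ => 1 : V → ℝ)} := by
    apply le_antisymm
    · intro p hp
      have hpe : ∀ e, p (G.src e) = p (G.dst e) := by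
        intro e
        have := congrFun (LinearMap.mem_ker.mp hp) e
        rw [hMt, Pi.zero_apply] at this
        linarith
      have hpc : ∀ a b : V, p a = p b := by
        intro a b
        induction hconn a b with
        | refl => rfl
        | tail _ he ih =>
          obtain ⟨e, h1 | h2⟩ := he
          · rw [ih, ← h1.1, ← h1.2, hpe e]
          · rw [ih, ← h2.1, ← h2.2, hpe e]
      rw [Submodule.mem_span_singleton]
      exact ⟨p (Classical.arbitrary V), by funext a; simp [hpc (Classical.arbitrary V) a]⟩
    · rw [Submodule.span_le, Set.singleton_subset_iff]
      refine LinearMap.mem_ker.mpr (funext fun e => ?_)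
      rw [hMt]; simp
  -- kernel of B is the constants
  have hkerN : LinearMap.ker N.mulVecLin = Submodule.span ℝ {(fun _ => 1 : H → ℝ)} := by
    apply le_antisymm
    · intro p hp
      have hpe : ∀ e, p (G.right e) = p (G.left e) := by
        intro e
        have := congrFun (LinearMap.mem_ker.mp hp) e
        rw [hBapp, Pi.zero_apply] at this
        linarith
      have hpc : ∀ a b : H, p a = p b := by
        intro a b
        induction hdual a b with
        | refl => rfl
        | tail _ he ih =>
          obtain ⟨e, h1 | h2⟩ := he
          · rw [ih, ← h1.1, ← h1.2, hpe e]
          · rw [ih, ← h2.1, ← h2.2, hpe e]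
      rw [Submodule.mem_span_singleton]
      exact ⟨p (Classical.arbitrary H), by funext a; simp [hpc (Classical.arbitrary H) a]⟩
    · rw [Submodule.span_le, Set.singleton_subset_iff]
      refine LinearMap.mem_ker.mpr (funext fun e => ?_)
      rw [hBapp]; simp
  have hone : ∀ (W : Type) [Fintype W] [Nonempty W],
      Module.finrank ℝ (Submodule.span ℝ {(fun _ => 1 : W → ℝ)}) = 1 := by
    intro W _ _
    apply finrank_span_singleton
    intro h
    have := congrFun h (Classical.arbitrary W)
    norm_num at this
  -- rank computations
  have e1 : Module.finrank ℝ (LinearMap.range M.transpose.mulVecLin) + 1 = Fintype.card V := by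
    have := LinearMap.finrank_range_add_finrank_ker (M.transpose.mulVecLin)
    rw [hkerMt, hone V, Module.finrank_fintype_fun_eq_card] at this
    exact this
  have e2 : Module.finrank ℝ (LinearMap.range N.mulVecLin) + 1 = Fintype.card H := by
    have := LinearMap.finrank_range_add_finrank_ker (N.mulVecLin)
    rw [hkerN, hone H, Module.finrank_fintype_fun_eq_card] at this
    exact this
  have e3 : Module.finrank ℝ (LinearMap.range M.mulVecLin)
      + Module.finrank ℝ (LinearMap.ker M.mulVecLin) = Fintype.card E := by
    have := LinearMap.finrank_range_add_finrank_ker (M.mulVecLin)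
    rw [Module.finrank_fintype_fun_eq_card] at this
    exact this
  have e4 : Module.finrank ℝ (LinearMap.range M.mulVecLin)
      = Module.finrank ℝ (LinearMap.range M.transpose.mulVecLin) := (Matrix.rank_transpose M).symm
  have heq : LinearMap.range N.mulVecLin = LinearMap.ker M.mulVecLin := by
    apply Submodule.eq_of_le_of_finrank_le hrangeker
    have h5 := heuler
    unfold EulerFormula at h5
    omega
  have hfker : f ∈ LinearMap.ker M.mulVecLin := by
    refine LinearMap.mem_ker.mpr (funext fun v => ?_)
    rw [hAnet, hf]; rfl
  rw [← heq] at hfker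
  obtain ⟨π, hπ⟩ := hfker
  exact ⟨π, fun e => by rw [← hπ, hBapp]⟩

/-- If the min-cost circulation problem on a plane graph has a finite optimum,
then its optimal value equals the optimal value of the face-potential LP on
the geometric dual, which in turn coincides (with the sign accounted for by
LP duality) with the optimal value of the min-cost transshipment problem
`G^` on the capacitated dual darts, with balances the face costs `c(h)` and
arc costs the dart capacities. -/
theorem stmt18 {V E H : Type} [Fintype V] [Fintype E] [Fintype H]
    [DecidableEq V] [DecidableEq H]
    (G : PlaneGraph V E H)
    (hconn : PrimalConnected G) (hdual : DualConnected G)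
    (heuler : EulerFormula V E H) (hface : FaceCond G)
    (c u ℓ : E → ℝ) (hlow : ∀ e, 0 ≤ ℓ e ∧ ℓ e ≤ u e)
    -- value sets of the three problems
    (Scirc : Set ℝ) (hScirc : Scirc =
      {x | ∃ f : E → ℝ, (∀ v, netAt G f v = 0) ∧ (∀ e, ℓ e ≤ f e ∧ f e ≤ u e) ∧
        x = ∑ e, c e * f e})
    (Sface : Set ℝ) (hSface : Sface =
      {x | ∃ π : H → ℝ,
        (∀ e, π (G.right e) - π (G.left e) ≤ u e ∧
              π (G.left e) - π (G.right e) ≤ -(ℓ e)) ∧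
        x = ∑ h, faceCost G c h * π h})
    -- the transshipment network `G^`: one arc per dual dart, from the face on
    -- the left of the dart to the face on its right, with cost the dart capacity
    (Str : Set ℝ) (hStr : Str =
      {x | ∃ φ : E ⊕ E → ℝ, (∀ d, 0 ≤ φ d) ∧
        (∀ h : H,
          (∑ d, if Sum.elim G.left G.right d = h then φ d else 0)
          - (∑ d, if Sum.elim G.right G.left d = h then φ d else 0)
          = faceCost G c h) ∧
        x = ∑ d, Sum.elim u (fun e => -(ℓ e)) d * φ d})
    -- the circulation problem has a finite optimal solution
    (hopt : ∃ x, IsLeast Scirc x) :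
    ∃ x, IsLeast Scirc x ∧ IsLeast Sface x ∧ IsLeast Str (-x) := by
  classical
  obtain ⟨x, hx⟩ := hopt
  rcases isEmpty_or_nonempty E with hE | hE
  · -- the degenerate case with no arcs
    haveI := hE
    have hx0 : x = 0 := by
      have hmem := hx.1
      rw [hScirc] at hmem
      obtain ⟨f, -, -, hval⟩ := hmem
      simpa using hval
    subst hx0
    have hfc : ∀ h, faceCost G c h = 0 := by
      intro h; unfold faceCost; simp
    refine ⟨0, hx, ⟨?_, ?_⟩, ?_⟩
    · rw [hSface]
      exact ⟨0, fun e => hE.elim e, by simp [hfc]⟩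
    · intro y hy
      rw [hSface] at hy
      obtain ⟨π, -, rfl⟩ := hy
      simp [hfc]
    · rw [neg_zero]
      constructor
      · rw [hStr]
        refine ⟨0, by simp, fun h => by simp [hfc], by simp⟩
      · intro y hy
        rw [hStr] at hy
        obtain ⟨φ, -, -, rfl⟩ := hy
        simp
  · haveI := hE
    -- cost identity
    have costid : ∀ π : H → ℝ,
        ∑ h, faceCost G c h * π h = ∑ e, c e * (π (G.right e) - π (G.left e)) := by
      intro π
      unfold faceCost
      simp only [sub_mul, Finset.sum_sub_distrib, sum_mul_ite_aux, mul_sub]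
    -- potentials induce circulations
    have hnet : ∀ (π : H → ℝ) (v : V), netAt G (fun e => π (G.right e) - π (G.left e)) v = 0 := by
      intro π v
      have hrepr : ∀ e, π (G.right e) - π (G.left e) = ∑ h, π h * faceFlow G h e := by
        intro e
        unfold faceFlow
        simp [mul_sub, mul_ite, mul_one, mul_zero, Finset.sum_sub_distrib, Finset.sum_ite_eq]
      unfold netAt
      simp only [hrepr]
      rw [sum_swap_aux, sum_swap_aux, ← Finset.sum_sub_distrib]
      have hz : ∀ h : H, π h * (∑ e, if G.src e = v then faceFlow G h e else 0)
          - π h * (∑ e, if G.dst e = v then faceFlow G h e else 0) = 0 := by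
        intro h
        rw [← mul_sub]
        have hfv := hface h v
        unfold netAt at hfv
        rw [hfv, mul_zero]
      rw [Finset.sum_congr rfl (fun h _ => hz h), Finset.sum_const_zero]
    -- the face LP and the circulation LP have the same value set
    have hSfS : Sface = Scirc := by
      rw [hSface, hScirc]
      ext y
      constructor
      · rintro ⟨π, hπ, rfl⟩
        refine ⟨fun e => π (G.right e) - π (G.left e), hnet π, ?_, costid π⟩
        intro e
        have h1 := (hπ e).1
        have h2 := (hπ e).2
        constructor <;> dsimp only <;> linarith
      · rintro ⟨f, hf1, hf2, rfl⟩
        obtain ⟨π, hπ⟩ := circ_repr G hconn hdual heuler hface f hf1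
        refine ⟨π, ?_, ?_⟩
        · intro e
          have h := hπ e
          have h2 := (hf2 e).1
          have h3 := (hf2 e).2
          constructor <;> linarith
        · rw [costid]
          apply Finset.sum_congr rfl
          intro e _
          rw [← hπ e]
    have G1 : IsLeast Sface x := by rw [hSfS]; exact hx
    -- an optimal potential
    have hmem := G1.1
    rw [hSface] at hmem
    obtain ⟨πs, hπs, hxval⟩ := hmem
    -- weak duality
    have weak : ∀ (φ : E ⊕ E → ℝ), (∀ d, 0 ≤ φ d) →
        (∀ h : H, (∑ d, if Sum.elim G.left G.right d = h then φ d else 0)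
          - (∑ d, if Sum.elim G.right G.left d = h then φ d else 0) = faceCost G c h) →
        -x ≤ ∑ d, Sum.elim u (fun e => -(ℓ e)) d * φ d := by
      intro φ hφ0 hbal
      have hb : ∑ h, faceCost G c h * πs h
          = ∑ d, φ d * πs (Sum.elim G.left G.right d)
            - ∑ d, φ d * πs (Sum.elim G.right G.left d) := by
        have h1 : ∀ h ∈ Finset.univ, faceCost G c h * πs h
            = ((∑ d, if Sum.elim G.left G.right d = h then φ d else 0)
              - (∑ d, if Sum.elim G.right G.left d = h then φ d else 0)) * πs h := by
          intro h _; rw [hbal h]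
        rw [Finset.sum_congr rfl h1]
        simp only [sub_mul, Finset.sum_sub_distrib, sum_mul_ite_aux]
      have hterm : ∀ d, 0 ≤ Sum.elim u (fun e => -(ℓ e)) d * φ d
          + (φ d * πs (Sum.elim G.left G.right d) - φ d * πs (Sum.elim G.right G.left d)) := by
        intro d
        rcases d with e | e
        · have h1 := (hπs e).1
          have h2 := hφ0 (Sum.inl e)
          simp only [Sum.elim_inl, Sum.elim_inr]
          nlinarith
        · have h1 := (hπs e).2
          have h2 := hφ0 (Sum.inr e)
          simp only [Sum.elim_inl, Sum.elim_inr]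
          nlinarith
      have hsum := Finset.sum_nonneg (fun d (_ : d ∈ Finset.univ) => hterm d)
      rw [Finset.sum_add_distrib, Finset.sum_sub_distrib, ← hb, ← hxval] at hsum
      linarith
    refine ⟨x, hx, G1, ?_, ?_⟩
    · -- -x ∈ Str via Farkas
      have hfar : ∃ φ' : ((E ⊕ E) ⊕ Unit) → ℝ, (∀ i, 0 ≤ φ' i) ∧
          ∀ k, (Sum.elim (fun h => -(faceCost G c h)) (fun _ => -x) : H ⊕ Unit → ℝ) k
            = ∑ i, φ' i *
              (Sum.elim
                (fun d => Sum.elim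
                  (fun h => (if Sum.elim G.right G.left d = h then (1:ℝ) else 0)
                    - (if Sum.elim G.left G.right d = h then 1 else 0))
                  (fun _ => Sum.elim u (fun e => -(ℓ e)) d))
                (fun _ => Sum.elim (fun _ => 0) (fun _ => 1)) : ((E ⊕ E) ⊕ Unit) → (H ⊕ Unit) → ℝ)
                i k := by
        apply farkas_coord
        intro y hy
        have ht : 0 ≤ y (Sum.inr ()) := by
          have := hy (Sum.inr ())
          simpa [Fintype.sum_sum_type] using this
        have hcon : ∀ d : E ⊕ E, 0 ≤ y (Sum.inl (Sum.elim G.right G.left d))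
            - y (Sum.inl (Sum.elim G.left G.right d))
            + Sum.elim u (fun e => -(ℓ e)) d * y (Sum.inr ()) := by
          intro d
          have := hy (Sum.inl d)
          simpa [Fintype.sum_sum_type, sub_mul, ite_mul, one_mul, zero_mul,
            Finset.sum_sub_distrib, Finset.sum_ite_eq] using this
        have hgoal : ∑ k, (Sum.elim (fun h => -(faceCost G c h)) (fun _ => -x) : H ⊕ Unit → ℝ) k * y k
            = -(∑ h, faceCost G c h * y (Sum.inl h)) - x * y (Sum.inr ()) := by
          simp only [Sum.elim_inl, Sum.elim_inr, Fintype.sum_sum_type, neg_mul,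
            Finset.sum_neg_distrib, Finset.univ_unique, Finset.sum_singleton]
          ring
        rw [hgoal]
        rcases eq_or_lt_of_le ht with ht0 | htpos
        · -- t = 0
          have hS : ∑ h, faceCost G c h * y (Sum.inl h) ≤ 0 := by
            have hmem2 : (x - ∑ h, faceCost G c h * y (Sum.inl h)) ∈ Sface := by
              rw [hSface]
              refine ⟨fun h => πs h - y (Sum.inl h), ?_, ?_⟩
              · intro e
                have h1 := (hπs e).1
                have h12 := (hπs e).2
                have h2 := hcon (Sum.inl e)
                have h3 := hcon (Sum.inr e)
                rw [← ht0] at h2 h3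
                simp only [Sum.elim_inl, Sum.elim_inr, mul_zero, add_zero] at h2 h3
                constructor <;> dsimp only <;> linarith
              · have hexp : ∀ h ∈ Finset.univ, faceCost G c h * (πs h - y (Sum.inl h))
                    = faceCost G c h * πs h - faceCost G c h * y (Sum.inl h) :=
                  fun h _ => by ring
                dsimp only
                rw [Finset.sum_congr rfl hexp, Finset.sum_sub_distrib, ← hxval]
            have := G1.2 hmem2
            linarith
          rw [← ht0]
          linarith
        · -- t > 0
          have hmem2 : (∑ h, faceCost G c h * (-(y (Sum.inl h)) / y (Sum.inr ()))) ∈ Sface := by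
            rw [hSface]
            refine ⟨fun h => -(y (Sum.inl h)) / y (Sum.inr ()), ?_, rfl⟩
            intro e
            have h2 := hcon (Sum.inl e)
            have h3 := hcon (Sum.inr e)
            simp only [Sum.elim_inl, Sum.elim_inr] at h2 h3
            constructor
            · rw [div_sub_div_same, div_le_iff₀ htpos]
              linarith
            · rw [div_sub_div_same, div_le_iff₀ htpos]
              linarith
          have hxle := G1.2 hmem2
          have hval : ∑ h, faceCost G c h * (-(y (Sum.inl h)) / y (Sum.inr ()))
              = (-(∑ h, faceCost G c h * y (Sum.inl h))) / y (Sum.inr ()) := by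
            have hv2 : ∀ h ∈ Finset.univ, faceCost G c h * (-(y (Sum.inl h)) / y (Sum.inr ()))
                = -(faceCost G c h * y (Sum.inl h)) / y (Sum.inr ()) :=
              fun h _ => by ring
            rw [Finset.sum_congr rfl hv2, ← Finset.sum_div, Finset.sum_neg_distrib]
          rw [hval] at hxle
          rw [le_div_iff₀ htpos] at hxle
          nlinarith
      obtain ⟨φ', hφ'0, hφ'⟩ := hfar
      rw [hStr]
      refine ⟨fun d => φ' (Sum.inl d), fun d => hφ'0 (Sum.inl d), ?_, ?_⟩
      · -- balance constraints
        intro h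
        have hh := hφ' (Sum.inl h)
        simp only [Sum.elim_inl, Sum.elim_inr, Fintype.sum_sum_type, mul_sub, mul_ite, mul_one,
          mul_zero, Finset.sum_sub_distrib, Finset.sum_const_zero, Finset.sum_add_distrib] at hh
        simp only [Fintype.sum_sum_type, Sum.elim_inl, Sum.elim_inr]
        linarith
      · -- optimal value
        have hh := hφ' (Sum.inr ())
        simp only [Sum.elim_inl, Sum.elim_inr, Fintype.sum_sum_type, mul_one] at hh
        -- hh : -x = ∑ d, φ'(inl d) * w d + φ'(inr ())
        have hwk : -x ≤ ∑ d, Sum.elim u (fun e => -(ℓ e)) d * φ' (Sum.inl d) := by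
          apply weak
          · exact fun d => hφ'0 (Sum.inl d)
          · intro h
            have hh2 := hφ' (Sum.inl h)
            simp only [Sum.elim_inl, Sum.elim_inr, Fintype.sum_sum_type, mul_sub, mul_ite, mul_one,
              mul_zero, Finset.sum_sub_distrib, Finset.sum_const_zero,
              Finset.sum_add_distrib] at hh2
            simp only [Fintype.sum_sum_type, Sum.elim_inl, Sum.elim_inr]
            linarith
        have h0 := hφ'0 (Sum.inr ())
        simp only [Fintype.sum_sum_type, Sum.elim_inl, Sum.elim_inr] at hwk ⊢
        simp only [Finset.univ_unique, Finset.sum_singleton] at hh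
        have c1 : ∑ x : E, u x * φ' (Sum.inl (Sum.inl x))
            = ∑ x : E, φ' (Sum.inl (Sum.inl x)) * u x :=
          Finset.sum_congr rfl (fun _ _ => mul_comm _ _)
        have c2 : ∑ x : E, -ℓ x * φ' (Sum.inl (Sum.inr x))
            = ∑ x : E, -(φ' (Sum.inl (Sum.inr x)) * ℓ x) :=
          Finset.sum_congr rfl (fun _ _ => by ring)
        rw [c1, c2] at hwk ⊢
        have h0' : 0 ≤ φ' (Sum.inr default) := h0
        ring_nf at hh hwk ⊢
        linarith
    · -- lower bound for Str
      intro y hy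
      rw [hStr] at hy
      obtain ⟨φ, h0, hbal, rfl⟩ := hy
      exact weak φ h0 hbal
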